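/- For the map Φ(z₁,z₂) = (-(2z₁z₂ - z₁ - z₂)/(2 - z₁ - z₂), z₂), if (z₁,z₂) lies in the closed bidisk with z₁ ≠ 1 and z₂ ≠ 1, then Φⁿ(z₁,z₂) → (z₂, z₂) as n → ∞. -/

import Mathlib

open Filter Topology

/-- For `Φ(z₁,z₂) = (-(2z₁z₂ - z₁ - z₂)/(2 - z₁ - z₂), z₂)`, if `(z₁,z₂)` lies in the
closed bidisk with `z₁ ≠ 1` and `z₂ ≠ 1`, then `Φⁿ(z₁,z₂) → (z₂,z₂)` as `n → ∞`. -/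
theorem stmt1 (Φ : ℂ × ℂ → ℂ × ℂ)
    (hΦ : ∀ z : ℂ × ℂ, Φ z = (-(2*z.1*z.2 - z.1 - z.2)/(2 - z.1 - z.2), z.2))
    (z₁ z₂ : ℂ) (h1 : ‖z₁‖ ≤ 1) (h2 : ‖z₂‖ ≤ 1)
    (hne1 : z₁ ≠ 1) (hne2 : z₂ ≠ 1) :
    Tendsto (fun n : ℕ => Φ^[n] (z₁, z₂)) atTop (𝓝 (z₂, z₂)) := by
  have h2z : (1:ℂ) - z₂ ≠ 0 := sub_ne_zero.mpr (Ne.symm hne2)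
  have h1z : (1:ℂ) - z₁ ≠ 0 := sub_ne_zero.mpr (Ne.symm hne1)
  have hpow : ∀ n : ℕ, ((2:ℂ)^n) ≠ 0 := fun n => pow_ne_zero n two_ne_zero
  -- the denominator is never zero
  have hDne : ∀ n : ℕ, (2:ℂ)^n - ((2:ℂ)^n - 1)*z₁ - z₂ ≠ 0 := by
    intro n h
    apply hne2
    have h2n : (1:ℝ) ≤ (2:ℝ)^n := one_le_pow₀ one_le_two
    have hz2 : z₂ = (((2:ℝ)^n : ℝ) : ℂ) - (((2:ℝ)^n - 1 : ℝ) : ℂ)*z₁ := by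
      push_cast
      linear_combination -h
    have hre : z₂.re = (2:ℝ)^n - (((2:ℝ)^n - 1 : ℝ) * z₁).re := by
      rw [hz2]
      simp only [Complex.sub_re, Complex.ofReal_re]
    have habs : ‖(((2:ℝ)^n - 1 : ℝ) : ℂ) * z₁‖ ≤ (2:ℝ)^n - 1 := by
      rw [norm_mul, Complex.norm_real, Real.norm_eq_abs, abs_of_nonneg (by linarith : (0:ℝ) ≤ (2:ℝ)^n - 1)]
      nlinarith
    have hrle : ((((2:ℝ)^n - 1 : ℝ) : ℂ) * z₁).re ≤ (2:ℝ)^n - 1 :=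
      le_trans (Complex.re_le_norm _) habs
    have hre1 : (1:ℝ) ≤ z₂.re := by
      rw [hre]; linarith
    have hrabs : z₂.re ≤ ‖z₂‖ := Complex.re_le_norm z₂
    have hreq : z₂.re = 1 := le_antisymm (by linarith) hre1
    have him : z₂.im = 0 := by
      have hsq : z₂.re^2 + z₂.im^2 ≤ 1 := by
        have hh := Complex.sq_norm z₂
        rw [Complex.normSq_apply] at hh
        nlinarith [norm_nonneg z₂]
      nlinarith
    exact Complex.ext (by simp [hreq]) (by simp [him])
  -- iterate formula
  have key : ∀ n : ℕ, Φ^[n] (z₁, z₂) =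
      (-((2:ℂ)^n*z₁*z₂ - z₁ - ((2:ℂ)^n - 1)*z₂)/((2:ℂ)^n - ((2:ℂ)^n - 1)*z₁ - z₂), z₂) := by
    intro n
    induction n with
    | zero =>
      simp only [Function.iterate_zero, id_eq, pow_zero]
      refine Prod.ext ?_ rfl
      simp only
      rw [eq_div_iff (by simpa using hDne 0)]
      ring
    | succ n ih =>
      rw [Function.iterate_succ_apply', ih, hΦ]
      refine Prod.ext ?_ rfl
      simp only
      set N : ℂ := (2:ℂ)^n*z₁*z₂ - z₁ - ((2:ℂ)^n - 1)*z₂ with hN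
      set D : ℂ := (2:ℂ)^n - ((2:ℂ)^n - 1)*z₁ - z₂ with hD
      have hDn : D ≠ 0 := hDne n
      have hDn1 : (2:ℂ)^(n+1) - ((2:ℂ)^(n+1) - 1)*z₁ - z₂ ≠ 0 := hDne (n+1)
      have hden : 2 - -N/D - z₂ = (((2:ℂ)^(n+1) - ((2:ℂ)^(n+1) - 1)*z₁ - z₂) * (1 - z₂)) / D := by
        field_simp
        rw [pow_succ]
        ring
      rw [hden]
      have hdne : (((2:ℂ)^(n+1) - ((2:ℂ)^(n+1) - 1)*z₁ - z₂) * (1 - z₂)) / D ≠ 0 :=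
        div_ne_zero (mul_ne_zero hDn1 h2z) hDn
      rw [div_eq_div_iff hdne hDn1]
      field_simp
      rw [pow_succ]
      ring
  simp only [key]
  refine Tendsto.prodMk_nhds ?_ tendsto_const_nhds
  -- rewrite dividing by 2^n
  have hrw : ∀ n : ℕ,
      -((2:ℂ)^n*z₁*z₂ - z₁ - ((2:ℂ)^n - 1)*z₂)/((2:ℂ)^n - ((2:ℂ)^n - 1)*z₁ - z₂)
      = -(z₁*z₂ - ((2:ℂ)⁻¹)^n*z₁ - (1 - ((2:ℂ)⁻¹)^n)*z₂)
        / (1 - (1 - ((2:ℂ)⁻¹)^n)*z₁ - ((2:ℂ)⁻¹)^n*z₂) := by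
    intro n
    have e : 1 - (1 - ((2:ℂ)⁻¹)^n)*z₁ - ((2:ℂ)⁻¹)^n*z₂
        = ((2:ℂ)^n - ((2:ℂ)^n - 1)*z₁ - z₂) * ((2:ℂ)^n)⁻¹ := by
      rw [inv_pow]
      field_simp [hpow n]
      try ring
    rw [div_eq_div_iff (hDne n) (by
      rw [e]
      exact mul_ne_zero (hDne n) (inv_ne_zero (hpow n)))]
    rw [inv_pow]
    field_simp [hpow n]
  simp only [hrw]
  have hhalf : Tendsto (fun n : ℕ => ((2:ℂ)⁻¹)^n) atTop (𝓝 0) := by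
    apply tendsto_pow_atTop_nhds_zero_of_norm_lt_one
    rw [norm_inv]
    norm_num
  have hnum : Tendsto (fun n : ℕ => -(z₁*z₂ - ((2:ℂ)⁻¹)^n*z₁ - (1 - ((2:ℂ)⁻¹)^n)*z₂))
      atTop (𝓝 (-(z₁*z₂ - 0*z₁ - (1 - 0)*z₂))) := by
    apply Tendsto.neg
    exact ((tendsto_const_nhds.sub (hhalf.mul tendsto_const_nhds)).sub
      ((tendsto_const_nhds.sub hhalf).mul tendsto_const_nhds))
  have hden : Tendsto (fun n : ℕ => 1 - (1 - ((2:ℂ)⁻¹)^n)*z₁ - ((2:ℂ)⁻¹)^n*z₂)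
      atTop (𝓝 (1 - (1 - 0)*z₁ - 0*z₂)) := by
    exact (tendsto_const_nhds.sub ((tendsto_const_nhds.sub hhalf).mul tendsto_const_nhds)).sub
      (hhalf.mul tendsto_const_nhds)
  have hdnz : (1:ℂ) - (1 - 0)*z₁ - 0*z₂ ≠ 0 := by simpa using h1z
  have := hnum.div hden hdnz
  convert this using 2
  · rfl
  · rw [eq_div_iff hdnz]
    ring
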